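/- For every γ ∈ (0,1] there exists a constant c > 0 such that for every integer n ≥ 1 and every continuously differentiable function v : [−1,1] → ℝ with v(−1) = v(1) = 0, one has ∫_{−1}^1 ( v′(x)² + (nπ)² |x|^{2γ} v(x)² ) dx ≥ c · n^{2/(1+γ)} · ∫_{−1}^1 v(x)² dx. (Lower bound for the first eigenvalue λ_{n,γ} of the operator A_{n,γ} v = −v″ + (nπ)² |x|^{2γ} v with Dirichlet boundary conditions on (−1,1), expressed through its Rayleigh-quotient characterization.) -/

import Mathlib

open MeasureTheory Set

set_option maxHeartbeats 1000000 in
/-- Lower bound `λ_{n,γ} ≥ c n^(2/(1+γ))` for the first Dirichlet eigenvalue of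
`A_{n,γ} v = -v'' + (nπ)² |x|^(2γ) v` on `(-1,1)`, expressed through the
Rayleigh-quotient characterization over C¹ test functions vanishing at `±1`. -/
theorem first_eigenvalue_lower_bound (γ : ℝ) (hγ : γ ∈ Set.Ioc (0 : ℝ) 1) :
    ∃ c > 0, ∀ n : ℕ, 1 ≤ n → ∀ v v' : ℝ → ℝ,
      (∀ x ∈ Set.Icc (-1 : ℝ) 1, HasDerivWithinAt v (v' x) (Set.Icc (-1 : ℝ) 1) x) →
      ContinuousOn v' (Set.Icc (-1 : ℝ) 1) →
      v (-1) = 0 → v 1 = 0 →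
      (∫ x in Set.Ioo (-1 : ℝ) 1,
          ((v' x) ^ 2 + ((n : ℝ) * Real.pi) ^ 2 * |x| ^ (2 * γ) * (v x) ^ 2))
        ≥ c * (n : ℝ) ^ ((2 : ℝ) / (1 + γ)) * ∫ x in Set.Ioo (-1 : ℝ) 1, (v x) ^ 2 := by
  obtain ⟨hγ0, hγ1⟩ := hγ
  have h1γ : (0:ℝ) < 1 + γ := by linarith
  refine ⟨1/4, by norm_num, ?_⟩
  intro n hn v v' hv hv'c hva hvb
  have hn1 : (1:ℝ) ≤ (n:ℝ) := by exact_mod_cast hn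
  set A : ℝ := (n : ℝ) * Real.pi with hAdef
  have hA1 : (1:ℝ) ≤ A := by
    have hπ := Real.pi_gt_three
    nlinarith
  have hA0 : (0:ℝ) < A := lt_of_lt_of_le one_pos hA1
  set p : ℝ := 1/(1+γ) with hpdef
  have hp0 : 0 < p := by positivity
  set B : ℝ := A ^ p with hBdef
  have hB0 : 0 < B := Real.rpow_pos_of_pos hA0 p
  have hB1 : 1 ≤ B := Real.one_le_rpow hA1 hp0.le
  set δ : ℝ := B⁻¹ with hδdef
  have hδ0 : 0 < δ := by positivity
  set μ : ℝ := B^2/2 with hμdef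
  have hμ0 : 0 < μ := by positivity
  have hμδ : μ * δ = B/2 := by
    rw [hμdef, hδdef]; field_simp
  -- key rpow identity: A^2 * δ^(2γ) = B^2
  have hkey : A ^ 2 * δ ^ (2*γ) = B ^ 2 := by
    have hδA : δ = A ^ (-p) := by rw [hδdef, hBdef, ← Real.rpow_neg hA0.le]
    have e1 : δ ^ (2*γ) = A ^ (-p * (2*γ)) := by
      rw [hδA, ← Real.rpow_mul hA0.le]
    have e2 : (A:ℝ)^2 = A ^ (2:ℝ) := (Real.rpow_two A).symm
    have e3 : B^2 = A ^ (p + p) := by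
      rw [Real.rpow_add hA0, hBdef, pow_two]
    rw [e1, e2, e3, ← Real.rpow_add hA0]
    congr 1
    rw [hpdef]
    field_simp
    ring
  set w : ℝ → ℝ := fun x => μ * max (-δ) (min δ x) with hwdef
  set d : ℝ → ℝ := fun x => if x ∈ Ico (-δ) δ then μ else 0 with hddef
  have hwc : Continuous w := by
    exact continuous_const.mul (continuous_const.max (continuous_const.min continuous_id))
  have hwbound : ∀ x : ℝ, (w x)^2 ≤ B^2/4 := by
    intro x
    have h1 : -δ ≤ max (-δ) (min δ x) := le_max_left _ _
    have h2 : max (-δ) (min δ x) ≤ δ := max_le (by linarith) (min_le_left _ _)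
    have : (w x)^2 ≤ (μ*δ)^2 := by
      simp only [hwdef]
      rw [mul_pow, mul_pow]
      have : (max (-δ) (min δ x))^2 ≤ δ^2 := by nlinarith
      nlinarith [sq_nonneg μ]
    rw [hμδ] at this
    nlinarith
  -- pointwise potential bound
  have hpoint : ∀ x : ℝ, B^2/4 ≤ d x + A^2 * |x| ^ (2*γ) - (w x)^2 := by
    intro x
    by_cases hx : x ∈ Ico (-δ) δ
    · have hd : d x = μ := if_pos hx
      have h0 : 0 ≤ A^2 * |x| ^ (2*γ) := by positivity
      have := hwbound x
      rw [hd, hμdef]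
      linarith
    · have hd : d x = 0 := if_neg hx
      have hxδ : δ ≤ |x| := by
        rw [mem_Ico] at hx
        push_neg at hx
        rcases lt_or_ge x (-δ) with h | h
        · rw [abs_of_neg (by linarith)]; linarith
        · rw [abs_of_nonneg (by linarith [hx h])]
          exact hx h
      have h1 : δ ^ (2*γ) ≤ |x| ^ (2*γ) :=
        Real.rpow_le_rpow hδ0.le hxδ (by positivity)
      have h2 : A^2 * δ^(2*γ) ≤ A^2 * |x|^(2*γ) :=
        mul_le_mul_of_nonneg_left h1 (by positivity)
      rw [hkey] at h2
      have := hwbound x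
      rw [hd]
      linarith
  -- derivative of v at interior points
  have hvd : ∀ x ∈ Ioo (-1:ℝ) 1, HasDerivAt v (v' x) x := fun x hx =>
    (hv x (Ioo_subset_Icc_self hx)).hasDerivAt (Icc_mem_nhds hx.1 hx.2)
  have hvc : ContinuousOn v (Icc (-1:ℝ) 1) := fun x hx => (hv x hx).continuousWithinAt
  set G : ℝ → ℝ := fun x => d x * v x ^ 2 + 2 * w x * v x * v' x with hGdef
  -- right derivative of w
  have hwd : ∀ x ∈ Ioo (-1:ℝ) 1, HasDerivWithinAt w (d x) (Ioi x) x := by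
    intro x _
    rcases lt_or_ge x (-δ) with h1 | h1
    · have hd : d x = 0 := if_neg (by rw [mem_Ico]; push_neg; intro h; linarith)
      rw [hd]
      have hev : ∀ᶠ y in nhds x, w y = μ * (-δ) := by
        filter_upwards [Iio_mem_nhds h1] with y hy
        have hy' : y < -δ := mem_Iio.1 hy
        have hyδ : y < δ := by linarith
        simp only [hwdef]
        rw [min_eq_right hyδ.le, max_eq_left hy'.le]
      exact ((hasDerivAt_const x (μ * (-δ))).congr_of_eventuallyEq hev).hasDerivWithinAt
    · rcases lt_or_ge x δ with h2 | h2
      · have hd : d x = μ := if_pos ⟨h1, h2⟩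
        rw [hd]
        have hev : ∀ᶠ y in nhdsWithin x (Ioi x), w y = μ * y := by
          filter_upwards [mem_nhdsWithin_of_mem_nhds (Iio_mem_nhds h2),
            self_mem_nhdsWithin] with y hy1 hy2
          have hy3 : -δ ≤ y := le_trans h1 (le_of_lt hy2)
          simp only [hwdef]
          rw [min_eq_right (le_of_lt hy1), max_eq_right hy3]
        have hx' : w x = μ * x := by
          simp only [hwdef]; rw [min_eq_right h2.le, max_eq_right h1]
        have hder : HasDerivAt (fun y => μ * y) μ x := by
          simpa using (hasDerivAt_id x).const_mul μ
        exact (hder.hasDerivWithinAt.congr_of_eventuallyEq hev hx')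
      · have hd : d x = 0 := if_neg (by rw [mem_Ico]; push_neg; intro _; exact h2)
        rw [hd]
        have hev : ∀ᶠ y in nhdsWithin x (Ioi x), w y = μ * δ := by
          filter_upwards [self_mem_nhdsWithin] with y hy
          have hy2 : δ ≤ y := le_trans h2 (le_of_lt hy)
          simp only [hwdef]
          rw [min_eq_left hy2, max_eq_right (by linarith)]
        have hx' : w x = μ * δ := by
          simp only [hwdef]
          rw [min_eq_left h2, max_eq_right (by linarith)]
        exact ((hasDerivAt_const x (μ * δ)).hasDerivWithinAt.congr_of_eventuallyEq hev hx')
  -- right derivative of F = w * v^2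
  have hF : ∀ x ∈ Ioo (-1:ℝ) 1,
      HasDerivWithinAt (fun y => w y * v y ^ 2) (G x) (Ioi x) x := by
    intro x hx
    have h1 := hwd x hx
    have h2 : HasDerivWithinAt (fun y => v y ^ 2) (2 * v x * v' x) (Ioi x) x := by
      have h3 : HasDerivAt (fun y => v y ^ 2) ((2:ℕ) * v x ^ 1 * v' x) x := (hvd x hx).pow 2
      have : HasDerivAt (fun y => v y ^ 2) (2 * v x * v' x) x := by
        convert h3 using 1; push_cast; ring
      exact this.hasDerivWithinAt
    have := h1.fun_mul h2
    refine this.congr_deriv ?_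
    simp only [hGdef]
    ring
  have hFcont : ContinuousOn (fun y => w y * v y ^ 2) (Icc (-1:ℝ) 1) :=
    (hwc.continuousOn.mul (hvc.pow 2))
  -- integrability of G
  have hGint : IntervalIntegrable G volume (-1:ℝ) 1 := by
    have h2 : IntervalIntegrable (fun x => 2 * w x * v x * v' x) volume (-1:ℝ) 1 := by
      apply ContinuousOn.intervalIntegrable
      rw [uIcc_of_le (by norm_num : (-1:ℝ) ≤ 1)]
      exact (((continuous_const.mul hwc).continuousOn.mul hvc).mul hv'c)
    have h1 : IntervalIntegrable (fun x => d x * v x ^ 2) volume (-1:ℝ) 1 := by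
      rw [intervalIntegrable_iff_integrableOn_Ioc_of_le (by norm_num : (-1:ℝ) ≤ 1)]
      have hμv : IntegrableOn (fun x => μ * v x ^ 2) (Ioc (-1:ℝ) 1) volume := by
        apply IntegrableOn.mono_set _ Ioc_subset_Icc_self
        exact (ContinuousOn.integrableOn_Icc ((continuousOn_const.mul (hvc.pow 2))))
      have hind := hμv.indicator (measurableSet_Ico : MeasurableSet (Ico (-δ) δ))
      have heq : (fun x => d x * v x ^ 2) =
          Set.indicator (Ico (-δ) δ) (fun x => μ * v x ^ 2) := by
        funext x
        by_cases hx : x ∈ Ico (-δ) δ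
        · rw [indicator_of_mem hx]; simp only [hddef, if_pos hx]
        · rw [indicator_of_notMem hx]; simp only [hddef, if_neg hx, zero_mul]
      rw [heq]
      exact hind
    exact h1.add h2
  -- FTC
  have hFTC : ∫ y in (-1:ℝ)..1, G y = 0 := by
    rw [intervalIntegral.integral_eq_sub_of_hasDeriv_right_of_le (by norm_num) hFcont hF hGint]
    simp [hva, hvb]
  have hG0 : ∫ x in Ioo (-1:ℝ) 1, G x = 0 := by
    rw [← integral_Ioc_eq_integral_Ioo, ← intervalIntegral.integral_of_le (by norm_num : (-1:ℝ) ≤ 1)]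
    exact hFTC
  -- integrability of pieces on Ioo
  have habs : Continuous (fun x : ℝ => |x| ^ (2*γ)) := by
    rw [continuous_iff_continuousAt]
    intro x
    exact (Real.continuousAt_rpow_const |x| (2*γ) (Or.inr (by positivity))).comp
      continuous_abs.continuousAt
  have hQint : IntegrableOn (fun x => v' x ^ 2 + A^2 * |x| ^ (2*γ) * v x ^ 2)
      (Ioo (-1:ℝ) 1) volume := by
    apply IntegrableOn.mono_set _ Ioo_subset_Icc_self
    apply ContinuousOn.integrableOn_Icc
    exact (hv'c.pow 2).add (((continuous_const.mul habs).continuousOn).mul (hvc.pow 2))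
  have hv2int : IntegrableOn (fun x => v x ^ 2) (Ioo (-1:ℝ) 1) volume :=
    ((hvc.pow 2).integrableOn_Icc).mono_set Ioo_subset_Icc_self
  have hGint' : IntegrableOn G (Ioo (-1:ℝ) 1) volume :=
    ((intervalIntegrable_iff_integrableOn_Ioc_of_le (by norm_num : (-1:ℝ) ≤ 1)).1
      hGint).mono_set Ioo_subset_Ioc_self
  have hRHSint : IntegrableOn (fun x => B^2/4 * v x ^ 2 - G x) (Ioo (-1:ℝ) 1) volume :=
    (hv2int.const_mul _).sub hGint'
  -- pointwise inequality and integration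
  have hmono : ∫ x in Ioo (-1:ℝ) 1, (B^2/4 * v x ^ 2 - G x) ≤
      ∫ x in Ioo (-1:ℝ) 1, (v' x ^ 2 + A^2 * |x| ^ (2*γ) * v x ^ 2) := by
    apply setIntegral_mono_on hRHSint hQint measurableSet_Ioo
    intro x _
    have hpt := hpoint x
    have hprod : B^2/4 * v x ^ 2 ≤ (d x + A^2 * |x|^(2*γ) - (w x)^2) * v x ^ 2 :=
      mul_le_mul_of_nonneg_right hpt (sq_nonneg _)
    have hsq : 0 ≤ v' x ^ 2 + 2 * w x * v x * v' x + (w x)^2 * v x ^ 2 := by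
      have h := sq_nonneg (v' x + w x * v x)
      have h2 : (v' x + w x * v x)^2
          = v' x ^ 2 + 2 * w x * v x * v' x + (w x)^2 * v x ^ 2 := by ring
      linarith [h2 ▸ h]
    have hprod' : B^2/4 * v x ^ 2
        ≤ d x * v x ^ 2 + A^2 * |x|^(2*γ) * v x ^ 2 - (w x)^2 * v x ^ 2 := by
      have h1 : (d x + A^2 * |x|^(2*γ) - (w x)^2) * v x ^ 2
          = d x * v x ^ 2 + A^2 * |x|^(2*γ) * v x ^ 2 - (w x)^2 * v x ^ 2 := by ring
      linarith [h1 ▸ hprod]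
    simp only [hGdef]
    linarith [hprod', hsq]
  have hsplit : ∫ x in Ioo (-1:ℝ) 1, (B^2/4 * v x ^ 2 - G x) =
      B^2/4 * ∫ x in Ioo (-1:ℝ) 1, v x ^ 2 := by
    rw [integral_sub (hv2int.const_mul _) hGint', hG0, sub_zero, integral_const_mul]
  -- final comparison
  have hB2 : B^2 = (n:ℝ) ^ ((2:ℝ)/(1+γ)) * Real.pi ^ ((2:ℝ)/(1+γ)) := by
    have e3 : B^2 = A ^ (p + p) := by
      rw [Real.rpow_add hA0, hBdef, pow_two]
    have e4 : p + p = (2:ℝ)/(1+γ) := by rw [hpdef]; ring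
    rw [e3, e4, hAdef, Real.mul_rpow (by positivity) Real.pi_pos.le]
  have hπ1 : 1 ≤ Real.pi ^ ((2:ℝ)/(1+γ)) :=
    Real.one_le_rpow (by linarith [Real.pi_gt_three]) (by positivity)
  have hv2nn : 0 ≤ ∫ x in Ioo (-1:ℝ) 1, v x ^ 2 :=
    setIntegral_nonneg measurableSet_Ioo (fun x _ => sq_nonneg _)
  have hnrp : 0 ≤ (n:ℝ) ^ ((2:ℝ)/(1+γ)) := Real.rpow_nonneg (by positivity) _
  have hcle : (1/4:ℝ) * (n:ℝ) ^ ((2:ℝ)/(1+γ)) ≤ B^2/4 := by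
    rw [hB2]; nlinarith
  calc (1/4:ℝ) * (n:ℝ) ^ ((2:ℝ)/(1+γ)) * ∫ x in Ioo (-1:ℝ) 1, v x ^ 2
      ≤ B^2/4 * ∫ x in Ioo (-1:ℝ) 1, v x ^ 2 := mul_le_mul_of_nonneg_right hcle hv2nn
    _ = ∫ x in Ioo (-1:ℝ) 1, (B^2/4 * v x ^ 2 - G x) := hsplit.symm
    _ ≤ ∫ x in Ioo (-1:ℝ) 1, (v' x ^ 2 + A^2 * |x| ^ (2*γ) * v x ^ 2) := hmono
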